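/- For 0 < α < 1 and m > 0, the function x ↦ −√(2m) K_{α−1}(√(2m)x)/K_α(√(2m)x) tends, as x → 0+, to be asymptotic to −(m^α Γ(1−α)/(2^{α−1} Γ(α))) x^{2α−1}, i.e., the ratio of the two sides converges to 1. -/

import Mathlib

open Real Filter Set

/-- Modified Bessel function of the first kind `I_ν`. -/
noncomputable def besselI (ν x : ℝ) : ℝ :=
  ∑' n : ℕ, (x / 2) ^ (2 * (n : ℝ) + ν) / ((n.factorial : ℝ) * Real.Gamma ((n : ℝ) + ν + 1))

/-- Modified Bessel function of the second kind `K_ν`, for non-integer `ν`. -/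
noncomputable def besselK (ν x : ℝ) : ℝ :=
  (Real.pi / 2) * (besselI (-ν) x - besselI ν x) / Real.sin (ν * Real.pi)

noncomputable def Sfun (ν t : ℝ) : ℝ :=
  ∑' n : ℕ, t ^ n / ((n.factorial : ℝ) * Real.Gamma ((n : ℝ) + ν + 1))

lemma gamma_half_le {s : ℝ} (hs : 0 < s) : (1/2 : ℝ) ≤ Real.Gamma s := by
  have key : ∀ s : ℝ, 1 ≤ s → (1/2 : ℝ) ≤ Real.Gamma s := by
    intro s hs1
    rcases le_or_gt 2 s with h2 | h2
    · have : Real.Gamma 2 ≤ Real.Gamma s := by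
        rcases eq_or_lt_of_le h2 with h | h
        · rw [h]
        · exact le_of_lt (Real.Gamma_strictMonoOn_Ici (mem_Ici.mpr (by norm_num)) (mem_Ici.mpr h2) h)
      rw [Real.Gamma_two] at this; linarith
    · have hrec : Real.Gamma (s + 1) = s * Real.Gamma s := Real.Gamma_add_one (by linarith)
      have h1 : Real.Gamma 2 ≤ Real.Gamma (s + 1) := by
        rcases eq_or_lt_of_le (by linarith : (2:ℝ) ≤ s + 1) with h | h
        · rw [h]
        · exact le_of_lt (Real.Gamma_strictMonoOn_Ici (mem_Ici.mpr (by norm_num)) (mem_Ici.mpr (by linarith)) h)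
      rw [Real.Gamma_two] at h1
      nlinarith [Real.Gamma_pos_of_pos (show (0:ℝ) < s by linarith)]
  rcases le_or_gt 1 s with h | h
  · exact key s h
  · have hrec : Real.Gamma (s + 1) = s * Real.Gamma s := Real.Gamma_add_one (ne_of_gt hs)
    have h1 := key (s+1) (by linarith)
    nlinarith [Real.Gamma_pos_of_pos hs]

lemma term_bound {ν : ℝ} (hν : -1 < ν) (t : ℝ) (ht : |t| ≤ 1) (n : ℕ) :
    |t ^ n / ((n.factorial : ℝ) * Real.Gamma ((n : ℝ) + ν + 1))| ≤ 2 / n.factorial := by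
  have hpos : (0:ℝ) < (n:ℝ) + ν + 1 := by
    have : (0:ℝ) ≤ (n:ℝ) := Nat.cast_nonneg n
    linarith
  have hg := gamma_half_le hpos
  have hgpos := Real.Gamma_pos_of_pos hpos
  have hfac : (0:ℝ) < (n.factorial : ℝ) := by positivity
  rw [abs_div, abs_pow, abs_of_pos (by positivity : (0:ℝ) < (n.factorial : ℝ) * Real.Gamma ((n : ℝ) + ν + 1))]
  have h1 : |t| ^ n ≤ 1 := pow_le_one₀ (abs_nonneg t) ht
  calc |t| ^ n / ((n.factorial : ℝ) * Real.Gamma ((n : ℝ) + ν + 1))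
      ≤ 1 / ((n.factorial : ℝ) * (1/2)) :=
        div_le_div₀ zero_le_one h1 (by positivity)
          (mul_le_mul_of_nonneg_left hg (le_of_lt hfac))
    _ = 2 / n.factorial := by field_simp

lemma Sfun_summable {ν : ℝ} (hν : -1 < ν) {t : ℝ} (ht : |t| ≤ 1) :
    Summable (fun n : ℕ => t ^ n / ((n.factorial : ℝ) * Real.Gamma ((n : ℝ) + ν + 1))) := by
  apply Summable.of_abs
  apply Summable.of_nonneg_of_le (fun n => abs_nonneg _) (term_bound hν t ht)
  simpa [div_eq_mul_inv] using (Real.summable_pow_div_factorial 1).mul_left 2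

noncomputable def Cbd : ℝ := ∑' n : ℕ, 2 / ((n + 1).factorial : ℝ)

lemma Cbd_summable : Summable (fun n : ℕ => 2 / ((n + 1).factorial : ℝ)) := by
  have h := ((Real.summable_pow_div_factorial 1).mul_left 2).congr (fun n => by rw [one_pow, mul_one_div])
  exact (summable_nat_add_iff 1).mpr h

lemma Sfun_est {ν : ℝ} (hν : -1 < ν) {t : ℝ} (ht0 : 0 ≤ t) (ht1 : t ≤ 1) :
    |Sfun ν t - 1 / Real.Gamma (ν + 1)| ≤ Cbd * t := by
  set f : ℕ → ℝ := fun n => t ^ n / ((n.factorial : ℝ) * Real.Gamma ((n : ℝ) + ν + 1)) with hf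
  have habs : |t| ≤ 1 := by rwa [abs_of_nonneg ht0]
  have hsum : Summable f := Sfun_summable hν habs
  have htail : Summable (fun n => f (n + 1)) := (summable_nat_add_iff 1).mpr hsum
  have hbound : ∀ n : ℕ, |f (n + 1)| ≤ 2 / ((n + 1).factorial : ℝ) * t := by
    intro n
    have hpos : (0:ℝ) < ((n:ℝ) + 1) + ν + 1 := by
      have : (0:ℝ) ≤ (n:ℝ) := Nat.cast_nonneg n
      linarith
    have hg := gamma_half_le hpos
    have hgpos := Real.Gamma_pos_of_pos hpos
    have hfac : (0:ℝ) < ((n + 1).factorial : ℝ) := by positivity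
    have hfe : f (n + 1) = t ^ (n + 1) / (((n + 1).factorial : ℝ) * Real.Gamma (((n:ℝ) + 1) + ν + 1)) := by
      simp [hf]
    rw [hfe, abs_of_nonneg (by positivity)]
    calc t ^ (n + 1) / (((n + 1).factorial : ℝ) * Real.Gamma (((n:ℝ) + 1) + ν + 1))
        ≤ t / (((n + 1).factorial : ℝ) * (1/2)) := by
          apply div_le_div₀ ht0 _ (by positivity)
            (mul_le_mul_of_nonneg_left hg (le_of_lt hfac))
          calc t ^ (n + 1) ≤ t ^ 1 := pow_le_pow_of_le_one ht0 ht1 (by omega)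
            _ = t := pow_one t
      _ = 2 / ((n + 1).factorial : ℝ) * t := by field_simp
  have hzero : Sfun ν t = f 0 + ∑' n, f (n + 1) := Summable.tsum_eq_zero_add hsum
  have hf0 : f 0 = 1 / Real.Gamma (ν + 1) := by simp [hf]
  have h1 : |Sfun ν t - 1 / Real.Gamma (ν + 1)| = |∑' n, f (n + 1)| := by
    rw [hzero, hf0]; congr 1; ring
  rw [h1]
  have h2 : |∑' n, f (n + 1)| ≤ ∑' n, |f (n + 1)| := by
    simpa using norm_tsum_le_tsum_norm (f := fun n => f (n+1)) (by simpa using htail.abs)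
  refine h2.trans ?_
  calc (∑' n, |f (n + 1)|) ≤ ∑' n : ℕ, 2 / ((n + 1).factorial : ℝ) * t :=
        Summable.tsum_le_tsum hbound htail.abs (Cbd_summable.mul_right t)
    _ = Cbd * t := by rw [tsum_mul_right]; rfl

lemma Sfun_tendsto {ν : ℝ} (hν : -1 < ν) :
    Tendsto (Sfun ν) (nhdsWithin 0 (Set.Ioi 0)) (nhds (1 / Real.Gamma (ν + 1))) := by
  have key : Tendsto (fun t => Sfun ν t - 1 / Real.Gamma (ν + 1)) (nhdsWithin 0 (Set.Ioi 0)) (nhds 0) := by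
    rw [tendsto_zero_iff_abs_tendsto_zero]
    apply squeeze_zero' (Eventually.of_forall fun t => abs_nonneg _)
    · filter_upwards [Ioo_mem_nhdsGT_of_mem (Set.mem_Ico.mpr ⟨le_refl 0, zero_lt_one⟩)] with t ht
      exact Sfun_est hν (le_of_lt ht.1) (le_of_lt ht.2)
    · have : Tendsto (fun t : ℝ => Cbd * t) (nhdsWithin 0 (Set.Ioi 0)) (nhds (Cbd * 0)) :=
        (tendsto_const_nhds.mul tendsto_id).mono_left nhdsWithin_le_nhds
      simpa using this
  have h2 : Tendsto (fun t => (Sfun ν t - 1 / Real.Gamma (ν + 1)) + 1 / Real.Gamma (ν + 1))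
      (nhdsWithin 0 (Set.Ioi 0)) (nhds (0 + 1 / Real.Gamma (ν + 1))) :=
    key.add tendsto_const_nhds
  simpa using h2

lemma besselI_eq {ν x : ℝ} (hx : 0 < x) :
    besselI ν x = (x / 2) ^ ν * Sfun ν ((x / 2) ^ 2) := by
  simp only [besselI, Sfun, ← tsum_mul_left]
  apply tsum_congr; intro n
  have h2 : (x / 2) ^ (2 * (n : ℝ) + ν) = ((x / 2) ^ 2) ^ n * (x / 2) ^ ν := by
    rw [Real.rpow_add (by positivity)]
    congr 1
    rw [show (2 * (n : ℝ)) = ((2 * n : ℕ) : ℝ) by push_cast; ring, Real.rpow_natCast, pow_mul]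
  rw [h2]; ring

theorem drift_asymptotics_at_zero (α m : ℝ) (hα : 0 < α) (hα1 : α < 1) (hm : 0 < m) :
    Filter.Tendsto
      (fun x : ℝ =>
        (-Real.sqrt (2 * m) * besselK (α - 1) (Real.sqrt (2 * m) * x) /
            besselK α (Real.sqrt (2 * m) * x)) /
          (-(m ^ α * Real.Gamma (1 - α) / (2 ^ (α - 1) * Real.Gamma α)) *
            x ^ (2 * α - 1)))
      (nhdsWithin 0 (Set.Ioi 0)) (nhds 1) := by
  set c := Real.sqrt (2 * m) with hc_def
  have hc : 0 < c := Real.sqrt_pos.mpr (by linarith)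
  have hπ := Real.pi_pos
  have hspos : 0 < Real.sin (α * Real.pi) :=
    Real.sin_pos_of_pos_of_lt_pi (by positivity) (by nlinarith)
  have hΓa : 0 < Real.Gamma α := Real.Gamma_pos_of_pos hα
  have hΓ1a : 0 < Real.Gamma (1 - α) := Real.Gamma_pos_of_pos (by linarith)
  set F := nhdsWithin (0:ℝ) (Set.Ioi 0) with hF
  set t : ℝ → ℝ := fun x => (c * x / 2) ^ 2 with ht_def
  -- limits of building blocks
  have hu : Tendsto (fun x : ℝ => c * x / 2) F (nhds 0) := by
    have hcont : Continuous fun x : ℝ => c * x / 2 := by continuity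
    have h := hcont.tendsto 0
    simp only [mul_zero, zero_div] at h
    exact h.mono_left nhdsWithin_le_nhds
  have ht : Tendsto t F (nhdsWithin 0 (Set.Ioi 0)) := by
    rw [tendsto_nhdsWithin_iff]
    constructor
    · have h2 := hu.pow 2
      simpa [ht_def] using h2
    · filter_upwards [self_mem_nhdsWithin] with x hx
      have hx' : 0 < x := hx
      simp only [ht_def, Set.mem_Ioi]
      positivity
  have hrpow : ∀ p : ℝ, 0 < p → Tendsto (fun x : ℝ => (c * x / 2) ^ p) F (nhds 0) := by
    intro p hp
    have hcont := (Real.continuousAt_rpow_const 0 p (Or.inr hp.le)).tendsto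
    have h2 := hcont.comp hu
    simpa [Real.zero_rpow (ne_of_gt hp), Function.comp_def] using h2
  have hS : ∀ ν : ℝ, -1 < ν →
      Tendsto (fun x => Sfun ν (t x)) F (nhds (1 / Real.Gamma (ν + 1))) := by
    intro ν hν
    exact (Sfun_tendsto hν).comp ht
  have hN : Tendsto (fun x => Sfun (α-1) (t x) - (c*x/2)^(2-2*α) * Sfun (1-α) (t x)) F
      (nhds (1 / Real.Gamma α)) := by
    have h1 := hS (α-1) (by linarith)
    have h2 := hS (1-α) (by linarith)
    have h3 := (hrpow (2-2*α) (by linarith)).mul h2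
    have h4 := h1.sub h3
    simpa [show α - 1 + 1 = α by ring] using h4
  have hD : Tendsto (fun x => Sfun (-α) (t x) - (c*x/2)^(2*α) * Sfun α (t x)) F
      (nhds (1 / Real.Gamma (1-α))) := by
    have h1 := hS (-α) (by linarith)
    have h2 := hS α (by linarith)
    have h3 := (hrpow (2*α) (by linarith)).mul h2
    have h4 := h1.sub h3
    simpa [show -α + 1 = 1-α by ring] using h4
  have hG : Tendsto (fun x => Real.Gamma α / Real.Gamma (1-α) *
      ((Sfun (α-1) (t x) - (c*x/2)^(2-2*α) * Sfun (1-α) (t x)) /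
       (Sfun (-α) (t x) - (c*x/2)^(2*α) * Sfun α (t x)))) F (nhds 1) := by
    have h5 := (tendsto_const_nhds (x := Real.Gamma α / Real.Gamma (1-α))).mul
      (hN.div hD (by positivity))
    have he : Real.Gamma α / Real.Gamma (1-α) * (1/Real.Gamma α / (1/Real.Gamma (1-α))) = 1 := by
      field_simp
    rwa [he] at h5
  -- the constant identity
  have hC : c * (c/2)^(2*α-1) = m^α / 2^(α-1) := by
    rw [Real.div_rpow hc.le (by norm_num : (0:ℝ) ≤ 2)]
    have hcc : c * c^(2*α-1) = c^(2*α) := by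
      nth_rewrite 1 [← Real.rpow_one c]
      rw [← Real.rpow_add hc]; congr 1; ring
    have hc2 : c^(2*α) = (2*m)^α := by
      rw [Real.rpow_mul hc.le]
      congr 1
      rw [Real.rpow_two, hc_def, Real.sq_sqrt (by positivity)]
    rw [← mul_div_assoc, hcc, hc2, Real.mul_rpow (by norm_num) hm.le]
    rw [div_eq_div_iff (by positivity) (by positivity)]
    have h2a : (2:ℝ)^α * 2^(α-1) = 2^(2*α-1) := by
      rw [← Real.rpow_add (by norm_num : (0:ℝ) < 2)]; congr 1; ring
    linear_combination m^α * h2a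
  have hC2 : c * (c/2)^(2*α-1) * 2^(α-1) = m^α :=
    (eq_div_iff (ne_of_gt (Real.rpow_pos_of_pos two_pos _))).mp hC
  refine hG.congr' ?_
  filter_upwards [self_mem_nhdsWithin] with x hx
  have hx' : 0 < x := hx
  have hu0 : 0 < c * x / 2 := by positivity
  have hcx : 0 < c * x := by positivity
  have hI : ∀ ν : ℝ, besselI ν (c * x) = (c*x/2) ^ ν * Sfun ν (t x) := fun ν => besselI_eq hcx
  set u := c * x / 2 with hu_def
  set k := Real.pi / (2 * Real.sin (α * Real.pi)) with hk_def
  have hk0 : k ≠ 0 := ne_of_gt (div_pos hπ (mul_pos two_pos hspos))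
  set SN := Sfun (α-1) (t x) - u^(2-2*α) * Sfun (1-α) (t x) with hSN_def
  set SD := Sfun (-α) (t x) - u^(2*α) * Sfun α (t x) with hSD_def
  have hKα : besselK α (c*x) = k * (u^(-α) * SD) := by
    simp only [besselK, hI (-α), hI α, hk_def, hSD_def]
    have e1 : u^α = u^(-α) * u^(2*α) := by
      rw [← Real.rpow_add hu0]; congr 1; ring
    rw [e1]; ring
  have hKβ : besselK (α-1) (c*x) = k * (u^(α-1) * SN) := by
    simp only [besselK]
    rw [show -(α-1) = 1-α by ring]
    rw [hI (1-α), hI (α-1)]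
    rw [show (α-1)*Real.pi = α*Real.pi - Real.pi by ring, Real.sin_sub_pi]
    have e1 : u^(1-α) = u^(α-1) * u^(2-2*α) := by
      rw [← Real.rpow_add hu0]; congr 1; ring
    rw [e1, hk_def, hSN_def]; ring
  rw [hKβ, hKα]
  have hstep : -c * (k*(u^(α-1)*SN)) / (k*(u^(-α)*SD)) = ((-c*k*u^(α-1))*SN) / ((k*u^(-α))*SD) := by
    ring
  rw [hstep, mul_div_mul_comm]
  have hstep2 : ((-c*k*u^(α-1))/(k*u^(-α))) * (SN/SD) /
      (-(m^α * Real.Gamma (1-α) / (2^(α-1) * Real.Gamma α)) * x^(2*α-1)) =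
      ((-c*k*u^(α-1))/((k*u^(-α)) * (-(m^α * Real.Gamma (1-α) / (2^(α-1) * Real.Gamma α)) * x^(2*α-1)))) * (SN/SD) := by
    ring
  rw [hstep2]
  congr 1
  have hA : u^(α-1) = u^(-α) * u^(2*α-1) := by
    rw [← Real.rpow_add hu0]; congr 1; ring
  have hB : u^(2*α-1) = (c/2)^(2*α-1) * x^(2*α-1) := by
    rw [hu_def, show c*x/2 = (c/2)*x by ring, Real.mul_rpow (by positivity) hx'.le]
  rw [hA, hB, ← hC2]
  have h1 : u^(-α) ≠ 0 := ne_of_gt (Real.rpow_pos_of_pos hu0 _)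
  have h2 : x^(2*α-1) ≠ 0 := ne_of_gt (Real.rpow_pos_of_pos hx' _)
  have h3 : ((2:ℝ))^(α-1) ≠ 0 := ne_of_gt (Real.rpow_pos_of_pos two_pos _)
  have h4 : ((c:ℝ)/2)^(2*α-1) ≠ 0 := ne_of_gt (Real.rpow_pos_of_pos (by positivity) _)
  field_simp
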